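/- Let A ∈ (0,3), B ∈ (0,∞) and α ∈ (0,∞). Then there exists a constant C = C(A,B,α) > 0 such that for all x ∈ ℝ³: ∫_{ℝ³} |x−y|^{−A} e^{−α|x−y|} (1+|y|)^{−B} dy ≤ C (1+|x|)^{−B}. -/

import Mathlib

open MeasureTheory Real Set Metric

noncomputable section

/-- Three-dimensional Euclidean space. -/
abbrev E3 : Type := EuclideanSpace ℝ (Fin 3)

/-- The wake function `s(x) = |x| + x₁`. -/
def wake (x : E3) : ℝ := ‖x‖ + x 0

/-- The `j`-th standard basis vector of `ℝ³`. -/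
def e3 (j : Fin 3) : E3 := EuclideanSpace.single j 1

/-- Euclidean norm of a triple of reals. -/
def vnorm (v : Fin 3 → ℝ) : ℝ := Real.sqrt (∑ i, v i ^ 2)

/-- bound: `(1+t)^B e^{-αt} ≤ M e^{-(α/2)t}` for `t ≥ 0`. -/
lemma aux_exp_bound {B α : ℝ} (hα : 0 < α) :
    ∃ M > 0, ∀ t : ℝ, 0 ≤ t →
      (1 + t) ^ B * Real.exp (-α * t) ≤ M * Real.exp (-(α/2) * t) := by
  suffices h : ∃ M > 0, ∀ t : ℝ, 0 ≤ t → (1 + t) ^ B * Real.exp (-(α/2) * t) ≤ M by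
    obtain ⟨M, hM, h⟩ := h
    refine ⟨M, hM, fun t ht => ?_⟩
    have e1 : (1+t)^B * Real.exp (-α * t)
        = ((1+t)^B * Real.exp (-(α/2)*t)) * Real.exp (-(α/2)*t) := by
      rw [mul_assoc, ← Real.exp_add]; ring_nf
    rw [e1]
    exact mul_le_mul_of_nonneg_right (h t ht) (Real.exp_nonneg _)
  set g : ℝ → ℝ := fun t => (1 + t) ^ B * Real.exp (-(α/2) * t) with hg
  have htend : Filter.Tendsto g Filter.atTop (nhds 0) := by
    have h1 := tendsto_rpow_mul_exp_neg_mul_atTop_nhds_zero B (α/2) (by positivity)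
    have h2 : Filter.Tendsto (fun t : ℝ => (1:ℝ) + t) Filter.atTop Filter.atTop :=
      Filter.tendsto_atTop_add_const_left _ _ Filter.tendsto_id
    have h3 := h1.comp h2
    have e2 : g = fun t => Real.exp (α/2) *
        ((1+t) ^ B * Real.exp (-(α/2) * (1+t))) := by
      funext t
      rw [hg]
      simp only
      rw [mul_comm (Real.exp (α/2)), mul_assoc, ← Real.exp_add]
      ring_nf
    rw [e2]
    simpa using h3.const_mul (Real.exp (α/2))
  obtain ⟨T, hT⟩ := (htend.eventually_lt_const (by norm_num : (0:ℝ) < 1)).exists_forall_of_atTop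
  set T' := max T 0 with hT'
  have hcont : ContinuousOn g (Icc 0 T') := by
    apply ContinuousOn.mul
    · apply ContinuousOn.rpow_const (by fun_prop)
      intro t ht
      left
      intro hc
      nlinarith [ht.1]
    · fun_prop
  obtain ⟨C, hC⟩ := (isCompact_Icc (a := (0:ℝ)) (b := T')).exists_bound_of_continuousOn hcont
  refine ⟨max C 1, lt_of_lt_of_le one_pos (le_max_right _ _), fun t ht => ?_⟩
  rcases le_or_gt t T' with h | h
  · have := hC t ⟨ht, h⟩
    calc g t ≤ ‖g t‖ := le_abs_self _
    _ ≤ C := this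
    _ ≤ max C 1 := le_max_left _ _
  · have : T ≤ t := le_trans (le_max_left T 0) h.le
    exact le_trans (hT t this).le (le_max_right _ _)

/-- Integrability of radial functions on `ℝ³` from 1D integrability of `f(r) r²`. -/
lemma integrable_radial {f : ℝ → ℝ} (hf : Measurable f)
    (h : IntegrableOn (fun r : ℝ => f r * r ^ (2:ℕ)) (Ioi 0)) :
    Integrable (fun x : E3 => f ‖x‖) := by
  have hne : MeasurableSet ({(0:E3)} : Set E3) := measurableSet_singleton _
  have hemb : MeasurableEmbedding ((↑) : ({(0:E3)}ᶜ : Set E3) → E3) :=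
    MeasurableEmbedding.subtype_coe hne.compl
  have step1 : IntegrableOn (fun x : E3 => f ‖x‖) ({(0:E3)}ᶜ) volume →
      Integrable (fun x : E3 => f ‖x‖) := by
    intro hh; rwa [IntegrableOn, MeasureTheory.restrict_compl_singleton] at hh
  apply step1
  rw [hemb.integrableOn_iff_comap (by rw [Subtype.range_coe])]
  have hpre : ((↑) : ({(0:E3)}ᶜ : Set E3) → E3) ⁻¹' ({(0:E3)}ᶜ) = univ := by
    ext x; simp [x.2]
  rw [hpre, integrableOn_univ]
  have mp := (volume : Measure E3).measurePreserving_homeomorphUnitSphereProd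
  have key : Integrable (fun r : Ioi (0:ℝ) => f r.1)
      (Measure.volumeIoiPow (Module.finrank ℝ E3 - 1)) := by
    have hdim : Module.finrank ℝ E3 - 1 = 2 := by
      rw [finrank_euclideanSpace_fin]
    rw [hdim, Measure.volumeIoiPow]
    rw [integrable_withDensity_iff (by fun_prop)
      (Filter.Eventually.of_forall fun x => ENNReal.ofReal_lt_top)]
    have hemb2 : MeasurableEmbedding ((↑) : (Ioi (0:ℝ)) → ℝ) :=
      MeasurableEmbedding.subtype_coe measurableSet_Ioi
    have := (hemb2.integrableOn_iff_comap (s := Ioi (0:ℝ))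
      (by rw [Subtype.range_coe])).mp h
    have hpre2 : ((↑) : (Ioi (0:ℝ)) → ℝ) ⁻¹' (Ioi 0) = univ := by
      ext x; simp [x.2]
    rw [hpre2, integrableOn_univ] at this
    apply this.congr
    apply Filter.Eventually.of_forall
    intro r
    simp only [Function.comp_apply]
    rw [ENNReal.toReal_ofReal (by positivity : (0:ℝ) ≤ r.1 ^ (2:ℕ))]
  have ecomp : (fun x : ({(0:E3)}ᶜ : Set E3) => f ‖(x:E3)‖) =
      (fun p : sphere (0:E3) 1 × Ioi (0:ℝ) => f p.2.1) ∘ (homeomorphUnitSphereProd E3) := by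
    funext x; simp [homeomorphUnitSphereProd_apply_snd_coe]
  show Integrable (fun x : ({(0:E3)}ᶜ : Set E3) => f ‖(x:E3)‖) (Measure.comap _ volume)
  rw [ecomp, mp.integrable_comp_emb (Homeomorph.measurableEmbedding _)]
  rw [integrable_prod_iff]
  · constructor
    · exact Filter.Eventually.of_forall fun _ => key
    · simpa using (integrable_const
        (∫ (y : Ioi (0:ℝ)), ‖f y.1‖ ∂(Measure.volumeIoiPow (Module.finrank ℝ E3 - 1))) :
        Integrable _ (volume : Measure E3).toSphere)
  · exact ((hf.comp (measurable_subtype_coe.comp measurable_snd))).aestronglyMeasurable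

/-- Integrability of the master kernel `‖z‖^{-A} e^{-α‖z‖} (1+‖z‖)^B` on `ℝ³`. -/
lemma integrable_master {A B α : ℝ} (hA0 : 0 < A) (hA3 : A < 3) (hα : 0 < α) :
    Integrable (fun z : E3 => ‖z‖ ^ (-A) * Real.exp (-α * ‖z‖) * (1 + ‖z‖) ^ B) := by
  apply integrable_radial (f := fun r : ℝ => r ^ (-A) * Real.exp (-α * r) * (1 + r) ^ B)
  · fun_prop
  · obtain ⟨M, hM, hMb⟩ := aux_exp_bound (B := B) hα
    have base : IntegrableOn (fun r : ℝ => r ^ (2 - A) * Real.exp (-(α/2) * r)) (Ioi 0) := by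
      have h0 := integrableOn_rpow_mul_exp_neg_mul_rpow
        (s := 2 - A) (p := 1) (b := α/2) (by linarith) one_pos (by positivity)
      exact h0.congr_fun (fun r hr => by beta_reduce; rw [Real.rpow_one]) measurableSet_Ioi
    apply Integrable.mono' ((base.const_mul M))
    · apply Measurable.aestronglyMeasurable
      fun_prop
    · filter_upwards [ae_restrict_mem measurableSet_Ioi] with r hr
      have hr0 : (0:ℝ) < r := hr
      have e1 : ‖r ^ (-A) * Real.exp (-α * r) * (1 + r) ^ B * r ^ (2:ℕ)‖
          = r ^ (2 - A) * ((1 + r) ^ B * Real.exp (-α * r)) := by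
        rw [Real.norm_eq_abs, abs_of_nonneg (by positivity)]
        rw [show (2:ℝ) - A = 2 + (-A) by ring, Real.rpow_add hr0,
          show ((2:ℝ)) = ((2:ℕ):ℝ) by norm_num, Real.rpow_natCast]
        ring
      rw [e1]
      calc r ^ (2 - A) * ((1 + r) ^ B * Real.exp (-α * r))
          ≤ r ^ (2 - A) * (M * Real.exp (-(α/2) * r)) := by
            apply mul_le_mul_of_nonneg_left (hMb r hr0.le) (by positivity)
        _ = M * (r ^ (2 - A) * Real.exp (-(α/2) * r)) := by ring

/-- Peetre-type inequality for the japanese brackets. -/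
lemma aux_bracket {B : ℝ} (hB : 0 < B) (x y : E3) :
    (1 + ‖y‖) ^ (-B) ≤ (1 + ‖x - y‖) ^ B * (1 + ‖x‖) ^ (-B) := by
  set a := 1 + ‖x - y‖ with ha
  set b := 1 + ‖y‖ with hb
  set c := 1 + ‖x‖ with hc
  have ha0 : 0 < a := by positivity
  have hb0 : 0 < b := by positivity
  have hc0 : 0 < c := by positivity
  have hkey : c ≤ a * b := by
    have hxy : ‖x‖ ≤ ‖x - y‖ + ‖y‖ := by
      calc ‖x‖ = ‖(x - y) + y‖ := by rw [sub_add_cancel]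
      _ ≤ ‖x - y‖ + ‖y‖ := norm_add_le _ _
    have hab : (0:ℝ) ≤ ‖x - y‖ * ‖y‖ := mul_nonneg (norm_nonneg _) (norm_nonneg _)
    rw [ha, hb, hc]
    nlinarith
  have hkeyB : c ^ B ≤ a ^ B * b ^ B := by
    rw [← Real.mul_rpow ha0.le hb0.le]
    exact Real.rpow_le_rpow hc0.le hkey hB.le
  have haB : (0:ℝ) < a ^ B := Real.rpow_pos_of_pos ha0 _
  have hbB : (0:ℝ) < b ^ B := Real.rpow_pos_of_pos hb0 _
  have hcB : (0:ℝ) < c ^ B := Real.rpow_pos_of_pos hc0 _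
  rw [Real.rpow_neg hb0.le, Real.rpow_neg hc0.le]
  have step : (b ^ B)⁻¹ * (c ^ B) ≤ a ^ B := by
    rw [inv_mul_le_iff₀ hbB]
    calc c ^ B ≤ a ^ B * b ^ B := hkeyB
    _ = b ^ B * a ^ B := by ring
  have := mul_le_mul_of_nonneg_right step (inv_nonneg.2 hcB.le)
  calc (b ^ B)⁻¹ = (b ^ B)⁻¹ * (c ^ B) * (c ^ B)⁻¹ := by
        rw [mul_assoc, mul_inv_cancel₀ hcB.ne', mul_one]
  _ ≤ a ^ B * (c ^ B)⁻¹ := this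

/-- **Convolution with an exponentially decaying kernel:** for `A ∈ (0,3)`, `B > 0`, `α > 0`,
`∫ |x−y|^{−A} e^{−α|x−y|} (1+|y|)^{−B} dy ≤ C (1+|x|)^{−B}`. -/
theorem conv_exp_kernel_estimate (A B α : ℝ) (hA0 : 0 < A) (hA3 : A < 3)
    (hB : 0 < B) (hα : 0 < α) :
    ∃ C > 0, ∀ x : E3,
      (∫ y : E3, ‖x - y‖ ^ (-A) * Real.exp (-α * ‖x - y‖) * (1 + ‖y‖) ^ (-B)) ≤
        C * (1 + ‖x‖) ^ (-B) := by
  set G : E3 → ℝ := fun z => ‖z‖ ^ (-A) * Real.exp (-α * ‖z‖) * (1 + ‖z‖) ^ B with hG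
  have hGint : Integrable G := integrable_master hA0 hA3 hα
  have hGnn : ∀ z, 0 ≤ G z := fun z => by rw [hG]; positivity
  set K := ∫ z : E3, G z with hK
  have hK0 : 0 ≤ K := integral_nonneg hGnn
  refine ⟨K + 1, by linarith, fun x => ?_⟩
  have hHint : Integrable (fun y : E3 => G (x - y) * (1 + ‖x‖) ^ (-B)) :=
    (hGint.comp_sub_left x).mul_const _
  have hmono : (∫ y : E3, ‖x - y‖ ^ (-A) * Real.exp (-α * ‖x - y‖) * (1 + ‖y‖) ^ (-B)) ≤
      ∫ y : E3, G (x - y) * (1 + ‖x‖) ^ (-B) := by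
    apply integral_mono_of_nonneg
    · exact Filter.Eventually.of_forall fun y => by positivity
    · exact hHint
    · apply Filter.Eventually.of_forall
      intro y
      simp only [hG]
      have hP : (0:ℝ) ≤ ‖x - y‖ ^ (-A) * Real.exp (-α * ‖x - y‖) := by positivity
      calc ‖x - y‖ ^ (-A) * Real.exp (-α * ‖x - y‖) * (1 + ‖y‖) ^ (-B)
          ≤ ‖x - y‖ ^ (-A) * Real.exp (-α * ‖x - y‖) *
            ((1 + ‖x - y‖) ^ B * (1 + ‖x‖) ^ (-B)) := by
            apply mul_le_mul_of_nonneg_left (aux_bracket hB x y) hP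
        _ = ‖x - y‖ ^ (-A) * Real.exp (-α * ‖x - y‖) * (1 + ‖x - y‖) ^ B *
            (1 + ‖x‖) ^ (-B) := by ring
  have heq : (∫ y : E3, G (x - y) * (1 + ‖x‖) ^ (-B)) = K * (1 + ‖x‖) ^ (-B) := by
    rw [integral_mul_const, integral_sub_left_eq_self G volume x]
  calc (∫ y : E3, ‖x - y‖ ^ (-A) * Real.exp (-α * ‖x - y‖) * (1 + ‖y‖) ^ (-B))
      ≤ ∫ y : E3, G (x - y) * (1 + ‖x‖) ^ (-B) := hmono
    _ = K * (1 + ‖x‖) ^ (-B) := heq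
    _ ≤ (K + 1) * (1 + ‖x‖) ^ (-B) := by
        apply mul_le_mul_of_nonneg_right (by linarith) (by positivity)

end
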